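/- Every Dirac structure D ⊆ F × F* (a subspace on which ⟨·,·⟩₊ vanishes identically, maximal with this property) is a maximally monotone structure. -/

import Mathlib

theorem dirac_is_maximally_monotone
    (F : Type*) [AddCommGroup F] [Module ℝ F] [FiniteDimensional ℝ F]
    (D : Submodule ℝ (F × Module.Dual ℝ F))
    (hD0 : ∀ p ∈ D, ∀ q ∈ D, p.2 q.1 + q.2 p.1 = 0)
    (hDmax : ∀ D' : Submodule ℝ (F × Module.Dual ℝ F),
        (∀ p ∈ D', ∀ q ∈ D', p.2 q.1 + q.2 p.1 = 0) → D ≤ D' → D' = D) :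
    (∀ p ∈ D, (0 : ℝ) ≤ p.2 p.1) ∧
      (∀ M' : Submodule ℝ (F × Module.Dual ℝ F),
        (∀ p ∈ M', (0 : ℝ) ≤ p.2 p.1) → D ≤ M' → M' = D) := by
  have hself : ∀ p ∈ D, p.2 p.1 = 0 := by
    intro p hp
    have := hD0 p hp p hp
    linarith
  constructor
  · intro p hp; rw [hself p hp]
  intro M' hM' hDM'
  -- Step 1: any functional annihilating the first projection of D gives (0, φ) ∈ D
  have hann : ∀ φ : Module.Dual ℝ F, (∀ d ∈ D, φ d.1 = 0) →
      ((0 : F), φ) ∈ D := by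
    intro φ hφ
    have hiso : ∀ p ∈ D ⊔ Submodule.span ℝ {((0:F), φ)},
        ∀ q ∈ D ⊔ Submodule.span ℝ {((0:F), φ)}, p.2 q.1 + q.2 p.1 = 0 := by
      intro p hp q hq
      rcases Submodule.mem_sup.mp hp with ⟨d, hd, s, hs, rfl⟩
      rcases Submodule.mem_sup.mp hq with ⟨d', hd', s', hs', rfl⟩
      rcases Submodule.mem_span_singleton.mp hs with ⟨a, rfl⟩
      rcases Submodule.mem_span_singleton.mp hs' with ⟨b, rfl⟩
      have h1 := hD0 d hd d' hd'
      have h2 := hφ d hd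
      have h3 := hφ d' hd'
      simp only [Prod.fst_add, Prod.snd_add, Prod.smul_mk, smul_zero,
        LinearMap.add_apply, LinearMap.smul_apply, add_zero, smul_eq_mul,
        map_zero, map_add, map_smul] at *
      rw [h2, h3]
      linarith
    have h := hDmax _ hiso le_sup_left
    have : ((0:F), φ) ∈ D ⊔ Submodule.span ℝ {((0:F), φ)} :=
      Submodule.mem_sup_right (Submodule.mem_span_singleton_self _)
    rwa [h] at this
  -- Step 2: every q ∈ M' is "orthogonal" to D
  have horth : ∀ q ∈ M', ∀ d ∈ D, d.2 q.1 + q.2 d.1 = 0 := by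
    intro q hq d hd
    by_contra hs
    set s : ℝ := d.2 q.1 + q.2 d.1 with hsdef
    set c : ℝ := q.2 q.1 with hcdef
    set t : ℝ := -(c + 1) / s with htdef
    have hmem : t • d + q ∈ M' := M'.add_mem (M'.smul_mem t (hDM' hd)) hq
    have hpos := hM' _ hmem
    have hdd : d.2 d.1 = 0 := hself d hd
    have hexp : (t • d + q).2 (t • d + q).1
        = t * t * (d.2 d.1) + t * s + c := by
      simp only [Prod.fst_add, Prod.snd_add, Prod.smul_fst, Prod.smul_snd,
        LinearMap.add_apply, LinearMap.smul_apply, map_add, map_smul,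
        smul_eq_mul, hsdef, hcdef]
      ring
    rw [hexp, hdd] at hpos
    have hts : t * s = -(c + 1) := by
      rw [htdef]; exact div_mul_cancel₀ _ hs
    rw [hts] at hpos
    linarith
  -- Step 3: M' ≤ D
  have hMD : M' ≤ D := by
    intro q hq
    -- q.1 is in the first projection of D
    have hf : q.1 ∈ D.map (LinearMap.fst ℝ F (Module.Dual ℝ F)) := by
      by_contra hf
      obtain ⟨φ, hφ1, hφ2⟩ := Submodule.exists_dual_map_eq_bot_of_notMem hf inferInstance
      have hφD : ∀ d ∈ D, φ d.1 = 0 := by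
        intro d hd
        have : φ d.1 ∈ (D.map (LinearMap.fst ℝ F (Module.Dual ℝ F))).map φ :=
          Submodule.mem_map_of_mem (Submodule.mem_map_of_mem hd)
        rw [hφ2] at this
        simpa using this
      have h0φ := hann φ hφD
      have := horth q hq _ h0φ
      simp at this
      exact hφ1 this
    obtain ⟨d', hd', hfst⟩ := hf
    have hfst' : d'.1 = q.1 := hfst
    -- correction term
    have hcorr : ∀ d ∈ D, (q.2 - d'.2) d.1 = 0 := by
      intro d hd
      have h1 := horth q hq d hd
      have h2 := hD0 d' hd' d hd
      rw [hfst'] at h2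
      simp only [LinearMap.sub_apply]
      linarith
    have h0c := hann _ hcorr
    have : d' + ((0:F), q.2 - d'.2) ∈ D := D.add_mem hd' h0c
    have heq : d' + ((0:F), q.2 - d'.2) = q := by
      apply Prod.ext <;> simp [hfst']
    rwa [heq] at this
  exact le_antisymm hMD hDM'
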